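/- Let S = {z ∈ ℂ : |z| = 1} be the unit circle, let f: S^m × ℂ^n → ℂ be continuous, let ζ ∈ S^m, and let (x_t)_{t≥1} ⊂ ℂ^n be a sequence converging to 0. Then the Cesàro averages (1/T) ∑_{t=1}^T f(ζ^t, x_t) converge as T → ∞, where ζ^t denotes the componentwise t-th power. -/

import Mathlib

open Filter

noncomputable def avgC (u : ℕ → ℂ) (T : ℕ) : ℂ :=
  (T : ℂ)⁻¹ * ∑ t ∈ Finset.Icc 1 T, u t

def PC (u : ℕ → ℂ) : Prop := ∃ L : ℂ, Tendsto (avgC u) atTop (nhds L)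

lemma avgC_norm_sub_le {u v : ℕ → ℂ} {C : ℝ} (hC : 0 ≤ C)
    (h : ∀ t, ‖u t - v t‖ ≤ C) (T : ℕ) : ‖avgC u T - avgC v T‖ ≤ C := by
  unfold avgC
  rw [← mul_sub, ← Finset.sum_sub_distrib]
  rcases Nat.eq_zero_or_pos T with h0 | hT
  · simp [h0, hC]
  · have hTR : (0:ℝ) < (T : ℝ) := by exact_mod_cast hT
    calc ‖(T : ℂ)⁻¹ * ∑ t ∈ Finset.Icc 1 T, (u t - v t)‖
        = (T : ℝ)⁻¹ * ‖∑ t ∈ Finset.Icc 1 T, (u t - v t)‖ := by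
          rw [norm_mul, norm_inv]
          norm_num
      _ ≤ (T : ℝ)⁻¹ * ((T : ℝ) * C) := by
          refine mul_le_mul_of_nonneg_left ?_ (by positivity)
          calc ‖∑ t ∈ Finset.Icc 1 T, (u t - v t)‖
              ≤ ∑ t ∈ Finset.Icc 1 T, ‖u t - v t‖ := norm_sum_le _ _
            _ ≤ ∑ _t ∈ Finset.Icc 1 T, C := Finset.sum_le_sum fun t _ => h t
            _ = (T : ℝ) * C := by
                rw [Finset.sum_const, Nat.card_Icc]
                simp [nsmul_eq_mul]
      _ = C := by field_simp

lemma sum_Icc_one (u : ℕ → ℂ) (T : ℕ) :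
    ∑ t ∈ Finset.Icc 1 T, u t = ∑ i ∈ Finset.range T, u (1 + i) := by
  rw [← Finset.Ico_add_one_right_eq_Icc, Finset.sum_Ico_eq_sum_range]
  simp

lemma PC_of_tendsto {u : ℕ → ℂ} {l : ℂ} (h : Tendsto u atTop (nhds l)) : PC u := by
  refine ⟨l, ?_⟩
  have h1 : Tendsto (fun i : ℕ => u (1 + i)) atTop (nhds l) := by
    have := h.comp (tendsto_add_atTop_nat 1)
    simpa [Function.comp_def, add_comm] using this
  have h2 := h1.cesaro_smul
  refine h2.congr fun T => ?_
  rw [avgC, sum_Icc_one]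
  rw [Complex.real_smul]
  push_cast
  ring

lemma PC_add {u v : ℕ → ℂ} (hu : PC u) (hv : PC v) : PC (fun t => u t + v t) := by
  obtain ⟨L, hL⟩ := hu
  obtain ⟨M, hM⟩ := hv
  refine ⟨L + M, ?_⟩
  have := hL.add hM
  refine this.congr fun T => ?_
  simp only [avgC, Finset.sum_add_distrib, mul_add]

lemma PC_smul (c : ℂ) {u : ℕ → ℂ} (hu : PC u) : PC (fun t => c * u t) := by
  obtain ⟨L, hL⟩ := hu
  refine ⟨c * L, ?_⟩
  have := hL.const_mul c
  refine this.congr fun T => ?_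
  simp only [avgC, Finset.mul_sum]
  exact Finset.sum_congr rfl fun t _ => by ring

lemma PC_monomial {w : ℂ} (hw : ‖w‖ = 1) : PC (fun t => w ^ t) := by
  have hwn : ‖w‖ = 1 := hw
  by_cases hw1 : w = 1
  · subst hw1
    refine ⟨1, ?_⟩
    have : ∀ᶠ T : ℕ in atTop, avgC (fun t => (1:ℂ) ^ t) T = 1 := by
      filter_upwards [eventually_ge_atTop 1] with T hT
      have hT0 : (T : ℂ) ≠ 0 := Nat.cast_ne_zero.mpr (by omega)
      simp [avgC, Nat.card_Icc, inv_mul_cancel₀ hT0]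
    exact tendsto_const_nhds.congr' (by filter_upwards [this] with T hT; rw [hT])
  · refine ⟨0, ?_⟩
    have hd : ‖w - 1‖ ≠ 0 := by
      simpa [sub_eq_zero] using hw1
    have key : ∀ T : ℕ, ‖avgC (fun t => w ^ t) T‖ ≤ (T : ℝ)⁻¹ * (2 / ‖w - 1‖) := by
      intro T
      have hsum : (∑ t ∈ Finset.Icc 1 T, w ^ t) * (w - 1) = w * (w ^ T - 1) := by
        rw [sum_Icc_one]
        have := geom_sum_mul w T
        have hshift : (∑ i ∈ Finset.range T, w ^ (1 + i))
            = w * ∑ i ∈ Finset.range T, w ^ i := by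
          rw [Finset.mul_sum]
          exact Finset.sum_congr rfl fun i _ => by rw [pow_add, pow_one]
        rw [hshift, mul_assoc, this]
      have hnorm : ‖∑ t ∈ Finset.Icc 1 T, w ^ t‖ ≤ 2 / ‖w - 1‖ := by
        have h1 : ‖∑ t ∈ Finset.Icc 1 T, w ^ t‖ * ‖w - 1‖ = ‖w * (w ^ T - 1)‖ := by
          rw [← norm_mul, hsum]
        have h2 : ‖w * (w ^ T - 1)‖ ≤ 2 := by
          rw [norm_mul, hwn, one_mul]
          calc ‖w ^ T - 1‖ ≤ ‖w ^ T‖ + ‖(1:ℂ)‖ := norm_sub_le _ _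
            _ = 2 := by rw [norm_pow, hwn]; norm_num
        have hdpos : 0 < ‖w - 1‖ := lt_of_le_of_ne (norm_nonneg _) (Ne.symm hd)
        rw [le_div_iff₀ hdpos, h1]
        exact h2
      calc ‖avgC (fun t => w ^ t) T‖
          = (T : ℝ)⁻¹ * ‖∑ t ∈ Finset.Icc 1 T, w ^ t‖ := by
            rw [avgC, norm_mul, norm_inv]; norm_num
        _ ≤ (T : ℝ)⁻¹ * (2 / ‖w - 1‖) := by
            exact mul_le_mul_of_nonneg_left hnorm (by positivity)
    have hlim : Tendsto (fun T : ℕ => (T : ℝ)⁻¹ * (2 / ‖w - 1‖)) atTop (nhds 0) := by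
      have := (tendsto_inv_atTop_nhds_zero_nat (𝕜 := ℝ)).mul_const (2 / ‖w - 1‖)
      simpa using this
    exact squeeze_zero_norm key hlim

lemma PC_approx {u : ℕ → ℂ}
    (h : ∀ ε : ℝ, 0 < ε → ∃ v : ℕ → ℂ, PC v ∧ ∀ t, ‖u t - v t‖ ≤ ε) : PC u := by
  have hc : CauchySeq (avgC u) := by
    rw [Metric.cauchySeq_iff']
    intro ε hε
    obtain ⟨v, ⟨L, hL⟩, hb⟩ := h (ε / 4) (by positivity)
    have hvb : ∀ T, ‖avgC u T - avgC v T‖ ≤ ε / 4 :=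
      avgC_norm_sub_le (by positivity) hb
    rw [Metric.tendsto_atTop] at hL
    obtain ⟨N, hN⟩ := hL (ε / 4) (by positivity)
    refine ⟨N, fun n hn => ?_⟩
    have h1 : dist (avgC u n) (avgC v n) ≤ ε / 4 := by
      rw [dist_eq_norm]; exact hvb n
    have h2 : dist (avgC v n) (avgC v N) < ε / 4 + ε / 4 :=
      lt_of_le_of_lt (dist_triangle_right _ _ L) (add_lt_add (hN n hn) (hN N le_rfl))
    have h3 : dist (avgC v N) (avgC u N) ≤ ε / 4 := by
      rw [dist_eq_norm, norm_sub_rev]; exact hvb N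
    calc dist (avgC u n) (avgC u N)
        ≤ dist (avgC u n) (avgC v n) + dist (avgC v n) (avgC v N)
            + dist (avgC v N) (avgC u N) := dist_triangle4 _ _ _ _
      _ < ε := by linarith
  exact cauchySeq_tendsto_of_complete hc

/-- Cesàro averages of `f(ζ^t, x_t)` converge for continuous `f`, `ζ` on the
torus, and `x_t → 0`. -/
theorem stmt_5 (m n : ℕ) (f : (Fin m → ℂ) × (Fin n → ℂ) → ℂ)
    (hf : Continuous f)
    (ζ : Fin m → ℂ) (hζ : ∀ i, ‖ζ i‖ = 1)
    (x : ℕ → (Fin n → ℂ)) (hx : Tendsto x atTop (nhds 0)) :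
    ∃ L : ℂ, Tendsto
      (fun T : ℕ => (T : ℂ)⁻¹ * ∑ t ∈ Finset.Icc 1 T, f (fun i => (ζ i) ^ t, x t))
      atTop (nhds L) := by
  classical
  -- the torus
  set K : Set (Fin m → ℂ) := Set.univ.pi (fun _ => Metric.sphere (0:ℂ) 1) with hKdef
  have hK : IsCompact K := isCompact_univ_pi fun _ => isCompact_sphere 0 1
  haveI : CompactSpace K := isCompact_iff_compactSpace.mp hK
  have hmemK : ∀ t : ℕ, (fun i => ζ i ^ t) ∈ K := by
    intro t
    rw [hKdef, Set.mem_univ_pi]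
    intro i
    simp [Complex.dist_eq, map_pow, hζ i]
  -- the orbit
  set orbit : ℕ → K := fun t => ⟨fun i => ζ i ^ t, hmemK t⟩ with horbit
  -- coordinate functions
  set coord : Fin m → C(K, ℂ) :=
    fun i => ⟨fun z => (z : Fin m → ℂ) i,
      (continuous_apply i).comp continuous_subtype_val⟩ with hcoord
  set A : StarSubalgebra ℂ C(K, ℂ) := StarAlgebra.adjoin ℂ (Set.range coord) with hA
  -- Stone–Weierstrass: A is dense
  have hsep : A.SeparatesPoints := by
    intro z w hzw
    have : ∃ i, (z : Fin m → ℂ) i ≠ (w : Fin m → ℂ) i := by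
      by_contra hcon
      push_neg at hcon
      exact hzw (Subtype.ext (funext hcon))
    obtain ⟨i, hi⟩ := this
    refine ⟨_, ⟨coord i, ?_, rfl⟩, hi⟩
    exact StarAlgebra.subset_adjoin ℂ (Set.range coord) ⟨i, rfl⟩
  have hdense : A.topologicalClosure = ⊤ :=
    ContinuousMap.starSubalgebra_topologicalClosure_eq_top_of_separatesPoints A hsep
  -- elements of the multiplicative closure are characters along the orbit
  have hmono : ∀ g ∈ Submonoid.closure ((Set.range coord) ∪ star (Set.range coord)),
      ∃ w : ℂ, ‖w‖ = 1 ∧ ∀ t, g (orbit t) = w ^ t := by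
    intro g hg
    induction hg using Submonoid.closure_induction with
    | mem g hg =>
        rcases hg with hg | hg
        · obtain ⟨i, rfl⟩ := hg
          exact ⟨ζ i, hζ i, fun t => rfl⟩
        · rw [Set.mem_star] at hg
          obtain ⟨i, hi⟩ := hg
          refine ⟨starRingEnd ℂ (ζ i), by rw [Complex.norm_conj]; exact hζ i, fun t => ?_⟩
          have : g = star (coord i) := by
            rw [hi, star_star]
          rw [this]
          simp only [ContinuousMap.star_apply]
          show star ((coord i) (orbit t)) = _
          rw [horbit, hcoord]
          simp only [ContinuousMap.coe_mk]
          rw [← map_pow]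
          rfl
    | one => exact ⟨1, by simp, fun t => by simp⟩
    | mul g h _ _ ihg ihh =>
        obtain ⟨w, hw, hwt⟩ := ihg
        obtain ⟨w', hw', hwt'⟩ := ihh
        refine ⟨w * w', by rw [norm_mul, hw, hw']; ring, fun t => ?_⟩
        rw [ContinuousMap.mul_apply, hwt, hwt', mul_pow]
  -- every element of A has convergent Cesàro averages along the orbit
  have hAconv : ∀ g ∈ A, PC (fun t => g (orbit t)) := by
    intro g hg
    have hg' : g ∈ Submodule.span ℂ
        ((Submonoid.closure ((Set.range coord) ∪ star (Set.range coord)) : Submonoid C(K, ℂ)) :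
          Set C(K, ℂ)) := by
      have h1 : g ∈ Subalgebra.toSubmodule (StarAlgebra.adjoin ℂ (Set.range coord)).toSubalgebra :=
        hg
      rwa [StarAlgebra.adjoin_eq_span] at h1
    clear hg
    induction hg' using Submodule.span_induction with
    | mem g hgm =>
        obtain ⟨w, hw, hwt⟩ := hmono g hgm
        have : (fun t => g (orbit t)) = fun t => w ^ t := funext hwt
        rw [this]
        exact PC_monomial hw
    | zero =>
        have h0 : (fun t => (0 : C(K, ℂ)) (orbit t)) = fun _ => (0:ℂ) := by
          funext t; simp
        rw [h0]
        exact PC_of_tendsto tendsto_const_nhds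
    | add g h _ _ ihg ihh =>
        have := PC_add ihg ihh
        refine (Exists.imp (fun L hL => ?_) this)
        exact hL.congr fun T => by
          simp only [avgC, ContinuousMap.add_apply]
    | smul c g _ ihg =>
        have := PC_smul c ihg
        refine (Exists.imp (fun L hL => ?_) this)
        exact hL.congr fun T => by
          simp only [avgC, ContinuousMap.smul_apply, smul_eq_mul]
  -- the function z ↦ f(z, 0) restricted to the torus
  have hFcont : Continuous fun z : K => f ((z : Fin m → ℂ), 0) :=
    hf.comp (continuous_subtype_val.prodMk continuous_const)
  set F : C(K, ℂ) := ⟨fun z => f ((z : Fin m → ℂ), 0), hFcont⟩ with hF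
  -- F is approximated by elements of A, so its averages converge
  have hPF : PC (fun t => F (orbit t)) := by
    apply PC_approx
    intro ε hε
    have hFcl : F ∈ closure (A : Set C(K, ℂ)) := by
      have h2 : F ∈ A.topologicalClosure := by rw [hdense]; trivial
      exact h2
    rw [Metric.mem_closure_iff] at hFcl
    obtain ⟨g, hgA, hgd⟩ := hFcl ε hε
    refine ⟨fun t => g (orbit t), hAconv g hgA, fun t => ?_⟩
    have := ContinuousMap.dist_apply_le_dist (f := F) (g := g) (orbit t)
    rw [dist_eq_norm] at this
    exact this.trans hgd.le
  -- the difference sequence tends to zero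
  set d : ℕ → ℂ := fun t => f (fun i => ζ i ^ t, x t) - F (orbit t) with hd
  have hdzero : Tendsto d atTop (nhds 0) := by
    have hcomp : IsCompact (K ×ˢ (insert 0 (Set.range x))) :=
      hK.prod hx.isCompact_insert_range
    have hucont : UniformContinuousOn f (K ×ˢ (insert 0 (Set.range x))) :=
      hcomp.uniformContinuousOn_of_continuous hf.continuousOn
    rw [Metric.uniformContinuousOn_iff] at hucont
    rw [Metric.tendsto_nhds]
    intro ε hε
    obtain ⟨δ, hδ, hδf⟩ := hucont ε hε
    have hxd : ∀ᶠ t in atTop, dist (x t) 0 < δ := by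
      rw [Metric.tendsto_nhds] at hx
      exact hx δ hδ
    filter_upwards [hxd] with t ht
    have hmem1 : ((fun i => ζ i ^ t), x t) ∈ K ×ˢ (insert 0 (Set.range x)) :=
      ⟨hmemK t, Set.mem_insert_of_mem _ ⟨t, rfl⟩⟩
    have hmem2 : ((fun i => ζ i ^ t), (0 : Fin n → ℂ)) ∈ K ×ˢ (insert 0 (Set.range x)) :=
      ⟨hmemK t, Set.mem_insert _ _⟩
    have hdist : dist ((fun i => ζ i ^ t), x t) ((fun i => ζ i ^ t), (0 : Fin n → ℂ)) < δ := by
      rw [Prod.dist_eq]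
      simp only [dist_self]
      rw [max_eq_right dist_nonneg]
      exact ht
    have := hδf _ hmem1 _ hmem2 hdist
    have heq : d t = f (fun i => ζ i ^ t, x t) - f (fun i => ζ i ^ t, 0) := rfl
    rw [heq, dist_zero_right, ← dist_eq_norm]
    exact this
  -- combine
  have hPd : PC d := PC_of_tendsto hdzero
  have hP : PC (fun t => F (orbit t) + d t) := PC_add hPF hPd
  obtain ⟨L, hL⟩ := hP
  refine ⟨L, hL.congr fun T => ?_⟩
  simp only [avgC, hd]
  congr 1
  exact Finset.sum_congr rfl fun t _ => by ring
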